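/- Let X = ((ω₁+1) × (ω+1)) \ {(ω₁,ω)} and 𝓑 = {B_{α,n} : α < ω₁, n < ω} as above. For each α < ω₁ the chain 𝓒_α = {B_{α,n} : n < ω} has intersection C_α = {(x, ω) : α ≤ x < ω₁}, the sets C_α (α < ω₁) form a strictly decreasing chain with ⋂_{α<ω₁} C_α = ∅. Hence (X, 𝓑) is not chain intersection stable and no chain intersection closed expansion of 𝓑 is spherically complete. -/

import Mathlib

open Ordinal

/-- The set `X = ((ω₁+1) × (ω+1)) \ {(ω₁, ω)}`. -/
def Xset : Set (Ordinal × Ordinal) :=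
  {p | p.1 ≤ ω₁ ∧ p.2 ≤ ω ∧ p ≠ (ω₁, ω)}

/-- The ball `B_{α,n} = {(x,y) ∈ X : α ≤ x, n ≤ y}`. -/
def Ball (a n : Ordinal) : Set (Ordinal × Ordinal) :=
  {p ∈ Xset | a ≤ p.1 ∧ n ≤ p.2}

/-- The family `𝓑 = {B_{α,n} : α < ω₁, n < ω}`. -/
def Bfam : Set (Set (Ordinal × Ordinal)) :=
  {s | ∃ a < ω₁, ∃ n < ω, s = Ball a n}

/-- `C_α = {(x, ω) : α ≤ x < ω₁}`. -/
def Cset (a : Ordinal) : Set (Ordinal × Ordinal) :=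
  {p | a ≤ p.1 ∧ p.1 < ω₁ ∧ p.2 = ω}

set_option linter.deprecated false in
lemma omega1_isLimit : Order.IsSuccLimit (ω₁ : Ordinal) := by
  exact Cardinal.isSuccLimit_omega 1

lemma zero_lt_omega1 : (0 : Ordinal) < ω₁ := omega0_pos.trans omega0_lt_omega_one

lemma mem_ball_self {a n : Ordinal} (ha : a < ω₁) (hn : n < ω) : (a, n) ∈ Ball a n := by
  refine ⟨⟨ha.le, hn.le, ?_⟩, le_rfl, le_rfl⟩
  intro h
  rw [Prod.ext_iff] at h
  exact absurd h.1 ha.ne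

lemma ball_mono {a n a' n' : Ordinal} (h1 : a' ≤ a) (h2 : n' ≤ n) : Ball a n ⊆ Ball a' n' :=
  fun _ hp => ⟨hp.1, h1.trans hp.2.1, h2.trans hp.2.2⟩

lemma le_of_ball_subset {a n a' n' : Ordinal} (ha : a < ω₁) (hn : n < ω)
    (h : Ball a n ⊆ Ball a' n') : a' ≤ a ∧ n' ≤ n := by
  have := h (mem_ball_self ha hn)
  exact ⟨this.2.1, this.2.2⟩

lemma Cset_nonempty {a : Ordinal} (ha : a < ω₁) : (Cset a).Nonempty :=
  ⟨(a, ω), le_rfl, ha, rfl⟩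

lemma Cset_anti {a b : Ordinal} (h : a ≤ b) : Cset b ⊆ Cset a :=
  fun _ hp => ⟨h.trans hp.1, hp.2⟩

lemma chain_balls_inter (a : Ordinal) (ha : a < ω₁) :
    ⋂₀ {s | ∃ n < ω, s = Ball a n} = Cset a := by
  ext p
  simp only [Set.mem_sInter, Set.mem_setOf_eq]
  constructor
  · intro h
    have h0 := h _ ⟨0, omega0_pos, rfl⟩
    have hω : ω ≤ p.2 := by
      rw [omega0_le]
      intro n
      exact (h _ ⟨n, nat_lt_omega0 n, rfl⟩).2.2
    have hp2 : p.2 = ω := le_antisymm h0.1.2.1 hω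
    refine ⟨h0.2.1, ?_, hp2⟩
    rcases lt_or_eq_of_le h0.1.1 with h1 | h1
    · exact h1
    · exfalso
      exact h0.1.2.2 (Prod.ext h1 hp2)
  · rintro hp s ⟨n, hn, rfl⟩
    refine ⟨⟨hp.2.1.le, hp.2.2.le, ?_⟩, hp.1, hn.le.trans hp.2.2.ge⟩
    intro h
    rw [Prod.ext_iff] at h
    exact absurd h.1 hp.2.1.ne

lemma Cset_inter_empty : ⋂₀ {s | ∃ a < ω₁, s = Cset a} = ∅ := by
  ext p
  simp only [Set.mem_sInter, Set.mem_setOf_eq, Set.mem_empty_iff_false, iff_false]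
  intro h
  have h0 := h _ ⟨0, omega0_pos.trans omega0_lt_omega_one, rfl⟩
  have h1 : p.1 + 1 < ω₁ := by
    rw [add_one_eq_succ]
    exact omega1_isLimit.succ_lt h0.2.1
  have h2 := h _ ⟨p.1 + 1, h1, rfl⟩
  have : p.1 + 1 ≤ p.1 := h2.1
  rw [add_one_eq_succ, Order.succ_le_iff] at this
  exact lt_irrefl _ this

/-- Every nonempty chain of balls has nonempty intersection. -/
lemma chain_inter_nonempty (U : Set (Set (Ordinal × Ordinal))) (hUB : U ⊆ Bfam)
    (hne : U.Nonempty) (hch : IsChain (· ⊆ ·) U) : (⋂₀ U).Nonempty := by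
  have key : ∀ s ∈ U, ∃ a, a < ω₁ ∧ ∃ n, n < ω ∧ s = Ball a n := fun s hs => hUB hs
  choose! f hf1 g hg1 hg2 using key
  by_cases hbd : ∃ N : ℕ, ∀ s ∈ U, g s ≤ (N : Ordinal)
  · obtain ⟨N, hN⟩ := hbd
    refine ⟨(ω₁, (N : Ordinal)), fun s hs => ?_⟩
    rw [hg2 s hs]
    refine ⟨⟨le_rfl, (nat_lt_omega0 N).le, ?_⟩, (hf1 s hs).le, hN s hs⟩
    intro h
    rw [Prod.ext_iff] at h
    exact absurd h.2 (nat_lt_omega0 N).ne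
  · push_neg at hbd
    choose t ht1 ht2 using hbd
    set β : Ordinal := ⨆ k : ℕ, f (t k) with hβdef
    have hβ : β < ω₁ := by
      exact Ordinal.iSup_lt_omega_one (fun k => hf1 _ (ht1 k))
    have hβle : ∀ k : ℕ, f (t k) ≤ β := fun k => Ordinal.le_iSup (fun k : ℕ => f (t k)) k
    have hall : ∀ s ∈ U, f s ≤ β := by
      intro s hs
      obtain ⟨m, hm⟩ := lt_omega0.1 (hg1 s hs)
      rcases eq_or_ne s (t (m + 1)) with rfl | hne'
      · exact hβle (m + 1)
      · rcases hch hs (ht1 (m + 1)) hne' with h | h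
        · -- s ⊆ t (m+1): contradiction
          exfalso
          rw [hg2 s hs, hg2 _ (ht1 (m + 1))] at h
          have := (le_of_ball_subset (hf1 s hs) (hg1 s hs) h).2
          have h2 := ht2 (m + 1)
          rw [hm] at this
          have : ((m + 1 : ℕ) : Ordinal) ≤ (m : ℕ) := h2.le.trans this
          exact absurd this (by exact_mod_cast Nat.not_succ_le_self m)
        · rw [hg2 s hs, hg2 _ (ht1 (m + 1))] at h
          exact (le_of_ball_subset (hf1 _ (ht1 (m + 1))) (hg1 _ (ht1 (m + 1))) h).1.trans
            (hβle (m + 1))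
    refine ⟨(β, ω), fun s hs => ?_⟩
    rw [hg2 s hs]
    refine ⟨⟨hβ.le, le_rfl, ?_⟩, hall s hs, (hg1 s hs).le⟩
    intro h
    rw [Prod.ext_iff] at h
    exact absurd h.1 hβ.ne

/-- Each chain `𝓒_α = {B_{α,n} : n < ω}` has intersection `C_α`; the `C_α`
form a strictly decreasing chain with empty intersection. Hence `(X, 𝓑)` is not
chain intersection stable and no chain intersection closed expansion of `𝓑` is
spherically complete. -/
theorem Bfam_not_chainIntersectionStable :
    (∀ a < ω₁, ⋂₀ {s | ∃ n < ω, s = Ball a n} = Cset a) ∧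
    (∀ a, ∀ b, a < b → b < ω₁ → Cset b ⊂ Cset a) ∧
    (⋂₀ {s | ∃ a < ω₁, s = Cset a} = ∅) ∧
    -- `(X, 𝓑)` is not chain intersection stable:
    ¬(∀ F : Set (Set (Set (Ordinal × Ordinal))), F.Nonempty →
        (∀ C ∈ F, C ⊆ Bfam ∧ C.Nonempty ∧ IsChain (· ⊆ ·) C) →
        IsChain (· ⊆ ·) {I | ∃ C ∈ F, I = ⋂₀ C} →
        ∃ U ⊆ Bfam, U.Nonempty ∧ IsChain (· ⊆ ·) U ∧ ⋂₀ U = ⋂ C ∈ F, ⋂₀ C) ∧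
    -- no chain intersection closed expansion of `𝓑` is spherically complete:
    ∀ B' : Set (Set (Ordinal × Ordinal)), Bfam ⊆ B' →
      (∀ C ⊆ B', C.Nonempty → IsChain (· ⊆ ·) C → ⋂₀ C = ∅ ∨ ⋂₀ C ∈ B') →
      ¬(∀ C ⊆ B', C.Nonempty → IsChain (· ⊆ ·) C → (⋂₀ C).Nonempty) := by
  refine ⟨fun a ha => chain_balls_inter a ha, ?_, Cset_inter_empty, ?_, ?_⟩
  · -- strict chain
    intro a b hab hb
    refine ⟨Cset_anti hab.le, fun hsub => ?_⟩
    have ha : a < ω₁ := hab.trans hb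
    have hmem : (a, ω) ∈ Cset a := ⟨le_rfl, ha, rfl⟩
    have := hsub hmem
    exact absurd this.1 (not_le.2 hab)
  · -- not chain intersection stable
    intro h
    set F : Set (Set (Set (Ordinal × Ordinal))) :=
      {C | ∃ a < ω₁, C = {s | ∃ n < ω, s = Ball a n}} with hF
    have hFne : F.Nonempty := ⟨_, ⟨0, zero_lt_omega1, rfl⟩⟩
    have hFmem : ∀ C ∈ F, C ⊆ Bfam ∧ C.Nonempty ∧ IsChain (· ⊆ ·) C := by
      rintro C ⟨a, ha, rfl⟩
      refine ⟨?_, ⟨Ball a 0, ⟨0, omega0_pos, rfl⟩⟩, ?_⟩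
      · rintro s ⟨n, hn, rfl⟩
        exact ⟨a, ha, n, hn, rfl⟩
      · rintro s ⟨n, hn, rfl⟩ s' ⟨n', hn', rfl⟩ _
        rcases le_total n n' with h' | h'
        · exact Or.inr (ball_mono le_rfl h')
        · exact Or.inl (ball_mono le_rfl h')
    have hFch : IsChain (· ⊆ ·) {I | ∃ C ∈ F, I = ⋂₀ C} := by
      rintro I ⟨C, ⟨a, ha, rfl⟩, rfl⟩ J ⟨C', ⟨b, hb, rfl⟩, rfl⟩ _
      rw [chain_balls_inter a ha, chain_balls_inter b hb]
      rcases le_total a b with h' | h'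
      · exact Or.inr (Cset_anti h')
      · exact Or.inl (Cset_anti h')
    obtain ⟨U, hUB, hUne, hUch, hU⟩ := h F hFne hFmem hFch
    have hrhs : ⋂ C ∈ F, ⋂₀ C = (∅ : Set (Ordinal × Ordinal)) := by
      rw [← Cset_inter_empty]
      ext p
      rw [Set.mem_iInter₂, Set.mem_sInter]
      constructor
      · rintro hp s ⟨a, ha, rfl⟩
        rw [← chain_balls_inter a ha]
        exact hp _ ⟨a, ha, rfl⟩
      · rintro hp C ⟨a, ha, rfl⟩
        rw [chain_balls_inter a ha]
        exact hp _ ⟨a, ha, rfl⟩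
    rw [hrhs] at hU
    obtain ⟨p, hp⟩ := chain_inter_nonempty U hUB hUne hUch
    rw [hU] at hp
    exact hp
  · -- no chain intersection closed expansion is spherically complete
    intro B' hsub hclosed hsc
    have hCmem : ∀ a < ω₁, Cset a ∈ B' := by
      intro a ha
      have hC : {s | ∃ n < ω, s = Ball a n} ⊆ B' := by
        rintro s ⟨n, hn, rfl⟩
        exact hsub ⟨a, ha, n, hn, rfl⟩
      have hCne : ({s | ∃ n < ω, s = Ball a n} : Set (Set (Ordinal × Ordinal))).Nonempty :=
        ⟨Ball a 0, ⟨0, omega0_pos, rfl⟩⟩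
      have hCch : IsChain (· ⊆ ·) {s | ∃ n < ω, s = Ball a n} := by
        rintro s ⟨n, hn, rfl⟩ s' ⟨n', hn', rfl⟩ _
        rcases le_total n n' with h' | h'
        · exact Or.inr (ball_mono le_rfl h')
        · exact Or.inl (ball_mono le_rfl h')
      rcases hclosed _ hC hCne hCch with h' | h'
      · exfalso
        rw [chain_balls_inter a ha] at h'
        obtain ⟨p, hp⟩ := Cset_nonempty ha
        rw [h'] at hp
        exact hp
      · rwa [chain_balls_inter a ha] at h'
    have hD : {s | ∃ a < ω₁, s = Cset a} ⊆ B' := by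
      rintro s ⟨a, ha, rfl⟩
      exact hCmem a ha
    obtain ⟨p, hp⟩ := hsc _ hD ⟨Cset 0, ⟨0, zero_lt_omega1, rfl⟩⟩ (by
      rintro s ⟨a, ha, rfl⟩ s' ⟨b, hb, rfl⟩ _
      rcases le_total a b with h' | h'
      · exact Or.inr (Cset_anti h')
      · exact Or.inl (Cset_anti h'))
    rw [Cset_inter_empty] at hp
    exact hp
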